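/- Let A = {a1 < a2 < ...} and B = {b1 < b2 < ...} be two infinite sequences of positive integers with b1 > 1 such that P(A) = ℕ \ B, and let k be the index with a_k < b1 < a_{k+1}. If b2 ≥ 3·b1 + 5, then P({a1, ..., a_{k+1}}) = [0, 2·b1] \ {b1}. -/

import Mathlib

/-- The set of all finite subset sums of a set of positive integers
(finite sums of distinct elements; the empty sum 0 is included). -/
def subsetSums (S : Set ℕ) : Set ℕ :=
  {n | ∃ F : Finset ℕ, ↑F ⊆ S ∧ ∑ x ∈ F, x = n}

lemma mem_subsetSums_image_iff {a : ℕ → ℕ} (hinj : Function.Injective a) (m n : ℕ) :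
    n ∈ subsetSums (a '' Set.Iio m) ↔
      ∃ t : Finset ℕ, t ⊆ Finset.range m ∧ ∑ j ∈ t, a j = n := by
  constructor
  · rintro ⟨F, hF, rfl⟩
    obtain ⟨t, ht, rfl⟩ := Finset.subset_set_image_iff.mp hF
    refine ⟨t, fun j hj => Finset.mem_range.mpr (ht hj), ?_⟩
    rw [Finset.sum_image fun x _ y _ h => hinj h]
  · rintro ⟨t, ht, rfl⟩
    refine ⟨t.image a, ?_, ?_⟩
    · rw [Finset.coe_image]
      exact Set.image_mono (fun j hj => Finset.mem_range.mp (ht hj))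
    · rw [Finset.sum_image fun x _ y _ h => hinj h]

lemma mem_subsetSums_range_iff {a : ℕ → ℕ} (hinj : Function.Injective a) (n : ℕ) :
    n ∈ subsetSums (Set.range a) ↔ ∃ t : Finset ℕ, ∑ j ∈ t, a j = n := by
  constructor
  · rintro ⟨F, hF, rfl⟩
    rw [← Set.image_univ] at hF
    obtain ⟨t, _, rfl⟩ := Finset.subset_set_image_iff.mp hF
    exact ⟨t, by rw [Finset.sum_image fun x _ y _ h => hinj h]⟩
  · rintro ⟨t, rfl⟩
    refine ⟨t.image a, ?_, ?_⟩
    · rw [Finset.coe_image]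
      exact (Set.image_subset_range a _)
    · rw [Finset.sum_image fun x _ y _ h => hinj h]

/-- Any index used in a representation of `n < a m` is below `m`. -/
lemma rep_subset {a : ℕ → ℕ} (ha : StrictMono a) {t : Finset ℕ} {m n : ℕ}
    (hsum : ∑ j ∈ t, a j = n) (hn : n < a m) : t ⊆ Finset.range m := by
  intro j hj
  have : a j ≤ n := hsum ▸ Finset.single_le_sum (fun i _ => Nat.zero_le _) hj
  exact Finset.mem_range.mpr (ha.lt_iff_lt.mp (lt_of_le_of_lt this hn))

lemma fill_step (a : ℕ → ℕ) (m : ℕ)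
    (ham : a m ≤ (∑ j ∈ Finset.range m, a j) + 1)
    (ih : ∀ n ≤ ∑ j ∈ Finset.range m, a j,
      ∃ t ⊆ Finset.range m, ∑ j ∈ t, a j = n) :
    ∀ n ≤ ∑ j ∈ Finset.range (m + 1), a j,
      ∃ t ⊆ Finset.range (m + 1), ∑ j ∈ t, a j = n := by
  intro n hn
  rw [Finset.sum_range_succ] at hn
  by_cases h : n ≤ ∑ j ∈ Finset.range m, a j
  · obtain ⟨t, ht, hs⟩ := ih n h
    exact ⟨t, ht.trans (Finset.range_subset_range.mpr (Nat.le_succ m)), hs⟩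
  · push_neg at h
    have ham' : a m ≤ n := le_trans ham h
    obtain ⟨t, ht, hs⟩ := ih (n - a m) (by omega)
    have hm : m ∉ t := fun hmt => (Finset.mem_range.mp (ht hmt)).false
    refine ⟨insert m t, ?_, ?_⟩
    · intro j hj
      rcases Finset.mem_insert.mp hj with rfl | hj
      · exact Finset.self_mem_range_succ j
      · exact Finset.range_subset_range.mpr (Nat.le_succ m) (ht hj)
    · rw [Finset.sum_insert hm, hs]; omega

/-- If `b₂ ≥ 3b₁+5` then `P({a₁,…,a_{k+1}}) = [0, 2b₁] \ {b₁}`.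
Here `a i`, `b i` are the `(i+1)`-st elements of `A`, `B`. -/
theorem stmt5 (a b : ℕ → ℕ) (ha : StrictMono a) (hapos : ∀ i, 0 < a i)
    (hb : StrictMono b) (hb1 : 1 < b 0)
    (hPA : subsetSums (Set.range a) = Set.univ \ Set.range b)
    (k : ℕ) (hk1 : a k < b 0) (hk2 : b 0 < a (k + 1))
    (hb2 : 3 * b 0 + 5 ≤ b 1) :
    subsetSums (a '' Set.Iio (k + 2)) = Set.Icc 0 (2 * b 0) \ {b 0} := by
  have hinj := ha.injective
  -- representability of non-`b` values
  have hrep : ∀ n, n ∉ Set.range b → ∃ t : Finset ℕ, ∑ j ∈ t, a j = n := by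
    intro n hn
    have : n ∈ subsetSums (Set.range a) := hPA ▸ ⟨trivial, hn⟩
    exact (mem_subsetSums_range_iff hinj n).mp this
  have hbnot : ∀ t : Finset ℕ, ∑ j ∈ t, a j ≠ b 0 := by
    intro t ht
    have : b 0 ∈ subsetSums (Set.range a) :=
      (mem_subsetSums_range_iff hinj _).mpr ⟨t, ht⟩
    rw [hPA] at this
    exact this.2 ⟨0, rfl⟩
  have hsmall : ∀ n, 0 < n → n < b 0 → ∃ t : Finset ℕ, ∑ j ∈ t, a j = n := by
    intro n _ hn
    refine hrep n ?_
    rintro ⟨i, rfl⟩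
    exact absurd (hb.monotone (Nat.zero_le i)) (by omega)
  -- a 0 = 1
  have ha0 : a 0 = 1 := by
    obtain ⟨t, ht⟩ := hsmall 1 one_pos (by omega)
    have htne : t.Nonempty := by
      rcases t.eq_empty_or_nonempty with rfl | h
      · simp at ht
      · exact h
    obtain ⟨j, hj⟩ := htne
    have : a j ≤ 1 := ht ▸ Finset.single_le_sum (fun i _ => Nat.zero_le _) hj
    have := hapos 0
    have h0j := ha.monotone (Nat.zero_le j)
    omega
  -- bounded representations land in initial segments
  have hrepbd : ∀ n m, 0 < n → n < b 0 → n < a m →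
      ∃ t ⊆ Finset.range m, ∑ j ∈ t, a j = n := by
    intro n m h0 h1 h2
    obtain ⟨t, ht⟩ := hsmall n h0 h1
    exact ⟨t, rep_subset ha ht h2, ht⟩
  have hsum_le : ∀ (t : Finset ℕ) m, t ⊆ Finset.range m →
      ∑ j ∈ t, a j ≤ ∑ j ∈ Finset.range m, a j :=
    fun t m htm => Finset.sum_le_sum_of_subset htm
  -- main induction
  have main : ∀ i, i ≤ k →
      (∀ n ≤ ∑ j ∈ Finset.range (i + 1), a j,
        ∃ t ⊆ Finset.range (i + 1), ∑ j ∈ t, a j = n) ∧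
      (∑ j ∈ Finset.range (i + 1), a j) + 1 ≤ b 0 := by
    intro i
    induction i with
    | zero =>
      intro _
      have hS1 : ∑ j ∈ Finset.range (0 + 1), a j = 1 := by
        simp [Finset.sum_range_one, ha0]
      constructor
      · intro n hn
        rw [hS1] at hn
        interval_cases n
        · exact ⟨∅, by simp⟩
        · exact ⟨{0}, by simp [ha0]⟩
      · have : a 0 ≤ a k := ha.monotone (Nat.zero_le k)
        omega
    | succ i ihi =>
      intro hik
      obtain ⟨ih, hSb⟩ := ihi (by omega)
      -- a (i+1) ≤ S (i+1) + 1
      have hstep : a (i + 1) ≤ (∑ j ∈ Finset.range (i + 1), a j) + 1 := by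
        by_contra hcon
        push_neg at hcon
        rcases lt_or_eq_of_le hSb with hlt | heq
        · have hlt2 : (∑ j ∈ Finset.range (i + 1), a j) + 1 < a (k + 1) := by omega
          obtain ⟨t, htk, hts⟩ :=
            hrepbd ((∑ j ∈ Finset.range (i + 1), a j) + 1) (k + 1) (by omega) hlt hlt2
          by_cases hcase : t ⊆ Finset.range (i + 1)
          · have := hsum_le t (i + 1) hcase
            omega
          · obtain ⟨j, hjt, hjr⟩ := Finset.not_subset.mp hcase
            have hji : i + 1 ≤ j := by
              by_contra h; exact hjr (Finset.mem_range.mpr (by omega))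
            have h1 : a (i + 1) ≤ a j := ha.monotone hji
            have h2 : a j ≤ (∑ j ∈ Finset.range (i + 1), a j) + 1 :=
              hts ▸ Finset.single_le_sum (fun i _ => Nat.zero_le _) hjt
            omega
        · -- S(i+1)+1 = b 0 : then a(i+1) ≥ b 0 + 1 > a k, contradiction
          have : a (i + 1) ≤ a k := ha.monotone (by omega)
          omega
      have hfill := fill_step a (i + 1) hstep ih
      refine ⟨hfill, ?_⟩
      by_contra hcon
      push_neg at hcon
      obtain ⟨t, _, hts⟩ := hfill (b 0) (by omega)
      exact hbnot t hts
  obtain ⟨hQ, hSle⟩ := main k le_rfl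
  -- S (k+1) + 1 = b 0
  have hSk : (∑ j ∈ Finset.range (k + 1), a j) + 1 = b 0 := by
    rcases lt_or_eq_of_le hSle with hlt | heq
    · exfalso
      obtain ⟨t, htk, hts⟩ :=
        hrepbd ((∑ j ∈ Finset.range (k + 1), a j) + 1) (k + 1) (by omega) hlt (by omega)
      have := hsum_le t (k + 1) htk
      omega
    · exact heq
  -- a (k+1) = b 0 + 1
  have hak1 : a (k + 1) = b 0 + 1 := by
    have hb01 : b 0 + 1 ∉ Set.range b := by
      rintro ⟨i, hi⟩
      rcases Nat.eq_zero_or_pos i with rfl | hipos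
      · omega
      · have : b 1 ≤ b i := hb.monotone hipos
        omega
    obtain ⟨t, hts⟩ := hrep (b 0 + 1) hb01
    have hak2 : b 0 + 1 < a (k + 2) := by
      have := ha (show k + 1 < k + 2 by omega)
      omega
    have htk2 : t ⊆ Finset.range (k + 2) := rep_subset ha hts hak2
    by_cases hcase : t ⊆ Finset.range (k + 1)
    · have := hsum_le t (k + 1) hcase
      omega
    · obtain ⟨j, hjt, hjr⟩ := Finset.not_subset.mp hcase
      have hjk : j = k + 1 := by
        have := Finset.mem_range.mp (htk2 hjt)
        have h2 : ¬ j < k + 1 := fun h => hjr (Finset.mem_range.mpr h)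
        omega
      subst hjk
      have : a (k + 1) ≤ b 0 + 1 :=
        hts ▸ Finset.single_le_sum (fun i _ => Nat.zero_le _) hjt
      omega
  -- final set equality
  have hS2 : ∑ j ∈ Finset.range (k + 2), a j = 2 * b 0 := by
    have : ∑ j ∈ Finset.range (k + 2), a j
        = (∑ j ∈ Finset.range (k + 1), a j) + a (k + 1) := Finset.sum_range_succ a (k + 1)
    omega
  ext n
  rw [mem_subsetSums_image_iff hinj]
  constructor
  · rintro ⟨t, htk, hts⟩
    have h1 : ∑ j ∈ t, a j ≤ ∑ j ∈ Finset.range (k + 2), a j := hsum_le t (k + 2) htk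
    refine ⟨⟨Nat.zero_le n, by omega⟩, ?_⟩
    intro hn
    exact hbnot t (by rw [hts]; exact hn)
  · rintro ⟨⟨_, hn2⟩, hnb⟩
    simp only [Set.mem_singleton_iff] at hnb
    by_cases hcase : n < b 0
    · obtain ⟨t, htk, hts⟩ := hQ n (by omega)
      exact ⟨t, htk.trans (Finset.range_subset_range.mpr (by omega)), hts⟩
    · push_neg at hcase
      have hn3 : b 0 < n := lt_of_le_of_ne hcase (Ne.symm hnb)
      obtain ⟨t, htk, hts⟩ := hQ (n - (b 0 + 1)) (by omega)
      have hm : k + 1 ∉ t := fun h => by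
        have := Finset.mem_range.mp (htk h); omega
      refine ⟨insert (k + 1) t, ?_, ?_⟩
      · intro j hj
        rcases Finset.mem_insert.mp hj with rfl | hj
        · exact Finset.mem_range.mpr (by omega)
        · exact (htk.trans (Finset.range_subset_range.mpr (by omega))) hj
      · rw [Finset.sum_insert hm, hts, hak1]
        omega
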